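/- If E ∈ ℝ satisfies E² ≤ 2 and E² ≠ 1, then u = E + E·(√(2 - E²) - 1)/(E² - 1) is a real root (in u) of the quartic characteristic polynomial E⁴ - 2u·E³ + (u² - 2)·E² + 4u·E - u², so that E is an eigenvalue of the 4×4 matrix H(u). -/

import Mathlib

open Complex Matrix

theorem stmt_15 (E : ℝ) (hE2 : E ^ 2 ≤ 2) (hE1 : E ^ 2 ≠ 1)
    (u : ℝ) (hu : u = E + E * (Real.sqrt (2 - E ^ 2) - 1) / (E ^ 2 - 1)) :
    E ^ 4 - 2 * u * E ^ 3 + (u ^ 2 - 2) * E ^ 2 + 4 * u * E - u ^ 2 = 0 ∧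
    (E : ℂ) ∈ spectrum ℂ
      (!![(u : ℂ) - I, -1, 0, 0; -1, 0, -1, 0; 0, -1, 0, -1; 0, 0, -1, (u : ℂ) + I] :
        Matrix (Fin 4) (Fin 4) ℂ) := by
  have hd : E ^ 2 - 1 ≠ 0 := sub_ne_zero.mpr hE1
  have hs2 : Real.sqrt (2 - E ^ 2) ^ 2 = 2 - E ^ 2 := Real.sq_sqrt (by linarith)
  have hpoly : E ^ 4 - 2 * u * E ^ 3 + (u ^ 2 - 2) * E ^ 2 + 4 * u * E - u ^ 2 = 0 := by
    subst hu
    field_simp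
    ring_nf
    linear_combination (E^4 - E^2) * hs2
  refine ⟨hpoly, ?_⟩
  rw [spectrum.mem_iff]
  intro h
  rw [Matrix.isUnit_iff_isUnit_det] at h
  have hdet : ((algebraMap ℂ (Matrix (Fin 4) (Fin 4) ℂ)) (E : ℂ) -
      !![(u : ℂ) - I, -1, 0, 0; -1, 0, -1, 0; 0, -1, 0, -1; 0, 0, -1, (u : ℂ) + I]).det
      = ((E : ℂ) ^ 4 - 2 * u * E ^ 3 + (u ^ 2 - 2) * E ^ 2 + 4 * u * E - u ^ 2) := by
    have : ((algebraMap ℂ (Matrix (Fin 4) (Fin 4) ℂ)) (E : ℂ) -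
        !![(u : ℂ) - I, -1, 0, 0; -1, 0, -1, 0; 0, -1, 0, -1; 0, 0, -1, (u : ℂ) + I]) =
        !![(E:ℂ) - (u - I), 1, 0, 0; 1, (E:ℂ), 1, 0; 0, 1, (E:ℂ), 1; 0, 0, 1, (E:ℂ) - (u + I)] := by
      ext i j
      fin_cases i <;> fin_cases j <;>
        simp [Matrix.algebraMap_eq_diagonal, Matrix.diagonal, Matrix.vecHead, Matrix.vecTail]
    rw [this]
    simp [Matrix.det_succ_row_zero, Fin.sum_univ_succ, Fin.succAbove]
    ring_nf
    linear_combination (1 - (E:ℂ)^2) * Complex.I_sq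
  rw [hdet] at h
  have : ((E : ℂ) ^ 4 - 2 * (u:ℂ) * E ^ 3 + ((u:ℂ) ^ 2 - 2) * E ^ 2 + 4 * (u:ℂ) * E - (u:ℂ) ^ 2) = 0 := by
    have hc := congrArg (Complex.ofReal) hpoly
    push_cast at hc
    linear_combination hc
  rw [this] at h
  exact h.ne_zero rfl
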